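/- Let 𝒞 ⊆ 𝔞 be a nonempty finitely generated convex set and let F, F' be two distinct faces of 𝒞. Then 𝔞_F^+ ∩ 𝔞_{F'}^+ = ∅. -/

import Mathlib

open Pointwise

variable {E : Type*} [NormedAddCommGroup E] [InnerProductSpace ℝ E] [FiniteDimensional ℝ E]

/-- A finitely generated convex set: a finite intersection of closed half-spaces. -/
def IsFGConvex (C : Set E) : Prop :=
  ∃ s : Finset (E × ℝ), C = {X | ∀ p ∈ s, (inner ℝ p.1 X : ℝ) ≤ p.2}

/-- The tangent cone `T_C(H) = ℝ≥0 · (C - H)`. -/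
def tangCone (C : Set E) (H : E) : Set E :=
  {X | ∃ t : ℝ, 0 ≤ t ∧ ∃ c ∈ C, X = t • (c - H)}

/-- The normal cone `N_C(H) = {Y | (Y,X) ≤ 0 for all X ∈ T_C(H)}`. -/
def normCone (C : Set E) (H : E) : Set E :=
  {Y | ∀ X ∈ tangCone C H, (inner ℝ Y X : ℝ) ≤ 0}

/-- The asymptotic cone of `C`: the set of `X` with `C + ℝ≥0 · X = C`. -/
def asympCone (C : Set E) : Set E :=
  {X | C + {Y | ∃ t : ℝ, 0 ≤ t ∧ Y = t • X} = C}

/-- The dual cone `C∨ = {Y | (Y,X) ≤ 0 for all X ∈ C}`. -/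
def polarCone (C : Set E) : Set E :=
  {Y | ∀ X ∈ C, (inner ℝ Y X : ℝ) ≤ 0}

/-- A face of `C`: the (nonempty) intersection of `C` with a supporting affine hyperplane
`{H | (λ,H) = c}`, where `(λ,H) ≤ c` on all of `C` (the case `λ = 0` being allowed). -/
def IsFace (C F : Set E) : Prop :=
  F.Nonempty ∧ ∃ (lam : E) (c : ℝ), (∀ H ∈ C, (inner ℝ lam H : ℝ) ≤ c) ∧
    F = {H | H ∈ C ∧ (inner ℝ lam H : ℝ) = c}

/-- `𝔞_F^+`: the relative interior of the normal cone `N_C(X_F)`, for `X_F` in the relative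
interior of the face `F` (this normal cone does not depend on the choice of such `X_F`). -/
def aFplus (C F : Set E) : Set E :=
  ⋃ X ∈ intrinsicInterior ℝ F, intrinsicInterior ℝ (normCone C X)



section AuxLemmas

variable {E : Type*} [NormedAddCommGroup E] [InnerProductSpace ℝ E] [FiniteDimensional ℝ E]

omit [FiniteDimensional ℝ E] in
lemma relint_extend {s : Set E} {x y : E} (hx : x ∈ intrinsicInterior ℝ s) (hy : y ∈ s) :
    ∃ ε : ℝ, 0 < ε ∧ x + ε • (x - y) ∈ s := by
  obtain ⟨x', hx'int, rfl⟩ := hx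
  have hyA : y ∈ affineSpan ℝ s := subset_affineSpan ℝ s hy
  have hmem : ∀ t : ℝ, (↑x' : E) + t • ((↑x' : E) - y) ∈ affineSpan ℝ s := by
    intro t
    have := AffineSubspace.smul_vsub_vadd_mem (affineSpan ℝ s) t x'.2 hyA x'.2
    simpa [vsub_eq_sub, vadd_eq_add, add_comm] using this
  set f : ℝ → affineSpan ℝ s := fun t => ⟨_, hmem t⟩ with hfdef
  have hf : Continuous f := by
    apply Continuous.subtype_mk
    continuity
  have h0 : f 0 = x' := by
    apply Subtype.ext
    simp [hfdef]
  have hnh : f ⁻¹' (interior ((↑) ⁻¹' s)) ∈ nhds (0 : ℝ) := by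
    apply hf.continuousAt.preimage_mem_nhds
    rw [h0]
    exact isOpen_interior.mem_nhds hx'int
  obtain ⟨ε, hε, hball⟩ := Metric.mem_nhds_iff.1 hnh
  refine ⟨ε / 2, by linarith, ?_⟩
  have h2 : f (ε / 2) ∈ ((↑) ⁻¹' s : Set (affineSpan ℝ s)) := by
    apply interior_subset
    apply hball
    simp only [Metric.mem_ball, dist_zero_right, Real.norm_eq_abs]
    rw [abs_of_pos (by linarith)]
    linarith
  exact h2

omit [FiniteDimensional ℝ E] in
lemma sub_mem_tangCone {C : Set E} {X H : E} (hH : H ∈ C) : H - X ∈ tangCone C X :=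
  ⟨1, zero_le_one, H, hH, (one_smul ℝ _).symm⟩

omit [FiniteDimensional ℝ E] in
lemma norm_le {C : Set E} {X Y H : E} (hY : Y ∈ normCone C X) (hH : H ∈ C) :
    (inner ℝ Y H : ℝ) ≤ inner ℝ Y X := by
  have := hY _ (sub_mem_tangCone hH)
  rw [inner_sub_right] at this
  linarith

lemma face_eq_argmax {C F : Set E} (hF : IsFace C F) {X Y : E}
    (hX : X ∈ intrinsicInterior ℝ F) (hY : Y ∈ intrinsicInterior ℝ (normCone C X)) :
    F = {H | H ∈ C ∧ (inner ℝ Y H : ℝ) = inner ℝ Y X} := by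
  obtain ⟨-, lam, c, hsupp, hFeq⟩ := hF
  have hXF : X ∈ F := intrinsicInterior_subset hX
  have hXC : X ∈ C := by rw [hFeq] at hXF; exact hXF.1
  have hXc : (inner ℝ lam X : ℝ) = c := by rw [hFeq] at hXF; exact hXF.2
  have hYN : Y ∈ normCone C X := intrinsicInterior_subset hY
  have hlamN : lam ∈ normCone C X := by
    rintro Z ⟨t, ht, c', hc', rfl⟩
    rw [real_inner_smul_right, inner_sub_right, hXc]
    have := hsupp c' hc'
    nlinarith
  ext H
  constructor
  · intro hHF
    have hHC : H ∈ C := by rw [hFeq] at hHF; exact hHF.1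
    refine ⟨hHC, ?_⟩
    have h1 : (inner ℝ Y H : ℝ) ≤ inner ℝ Y X := norm_le hYN hHC
    obtain ⟨ε, hε, hmem⟩ := relint_extend hX hHF
    have hmemC : X + ε • (X - H) ∈ C := by rw [hFeq] at hmem; exact hmem.1
    have h2 : (inner ℝ Y (X + ε • (X - H)) : ℝ) ≤ inner ℝ Y X := norm_le hYN hmemC
    rw [inner_add_right, real_inner_smul_right, inner_sub_right] at h2
    nlinarith
  · rintro ⟨hHC, hHeq⟩
    rw [hFeq]
    refine ⟨hHC, le_antisymm (hsupp H hHC) ?_⟩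
    obtain ⟨ε, hε, hmem⟩ := relint_extend hY hlamN
    have := hmem _ (sub_mem_tangCone (X := X) hHC)
    rw [inner_add_left, real_inner_smul_left, inner_sub_left, inner_sub_right,
      inner_sub_right] at this
    nlinarith

end AuxLemmas

theorem stmt_6 (C F F' : Set E) (hC : IsFGConvex C) (hne : C.Nonempty)
    (hF : IsFace C F) (hF' : IsFace C F') (hFF' : F ≠ F') :
    aFplus C F ∩ aFplus C F' = ∅ := by
  ext Y
  simp only [Set.mem_inter_iff, Set.mem_empty_iff_false, iff_false, not_and]
  intro h1 h2
  simp only [aFplus, Set.mem_iUnion, exists_prop] at h1 h2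
  obtain ⟨X, hX, hY⟩ := h1
  obtain ⟨X', hX', hY'⟩ := h2
  have hXC : X ∈ C := by
    obtain ⟨-, lam, c, -, hFeq⟩ := hF
    have := intrinsicInterior_subset hX
    rw [hFeq] at this; exact this.1
  have hXC' : X' ∈ C := by
    obtain ⟨-, lam, c, -, hFeq⟩ := hF'
    have := intrinsicInterior_subset hX'
    rw [hFeq] at this; exact this.1
  have e1 : (inner ℝ Y X' : ℝ) ≤ inner ℝ Y X := norm_le (intrinsicInterior_subset hY) hXC'
  have e2 : (inner ℝ Y X : ℝ) ≤ inner ℝ Y X' := norm_le (intrinsicInterior_subset hY') hXC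
  apply hFF'
  rw [face_eq_argmax hF hX hY, face_eq_argmax hF' hX' hY',
    show (inner ℝ Y X' : ℝ) = inner ℝ Y X from le_antisymm e1 e2]
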